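/- Define F(r,v,C) = (r+v, R[C(r+v)]·v, flip_{r+v}(C)) and G(r,v,C) = (r − R[C(r)]·v, R[C(r)]·v, flip_r(C)), where flip_h(C) is the configuration agreeing with C except negated at h, and R[z] is rotation by −πz/3 for z ∈ {−1,1}. Then G(F(r,v,C)) = (r,v,C) for every state (r,v,C). -/

import Mathlib

open Real Matrix

/-- Rotation by angle `-πz/3`. -/
noncomputable def rot (z : ℤ) : Matrix (Fin 2) (Fin 2) ℝ :=
  !![Real.cos (π * z / 3), Real.sin (π * z / 3);
     -Real.sin (π * z / 3), Real.cos (π * z / 3)]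

/-- A state: position, velocity, and scatterer configuration. -/
abbrev FRState : Type := (Fin 2 → ℝ) × (Fin 2 → ℝ) × ((Fin 2 → ℝ) → ℤ)

/-- Flip the scatterer at site `h`. -/
noncomputable def flipAt (h : Fin 2 → ℝ) (C : (Fin 2 → ℝ) → ℤ) : (Fin 2 → ℝ) → ℤ :=
  fun h' => if h' = h then -C h' else C h'

/-- The forward one-step map `F(r,v,C) = (r+v, R[C(r+v)]·v, flip_{r+v}(C))`. -/
noncomputable def Fwd (s : FRState) : FRState :=
  ⟨s.1 + s.2.1, (rot (s.2.2 (s.1 + s.2.1))).mulVec s.2.1, flipAt (s.1 + s.2.1) s.2.2⟩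

/-- The backward map `G(r,v,C) = (r − R[C(r)]·v, R[C(r)]·v, flip_r(C))`. -/
noncomputable def Bwd (s : FRState) : FRState :=
  ⟨s.1 - (rot (s.2.2 s.1)).mulVec s.2.1, (rot (s.2.2 s.1)).mulVec s.2.1, flipAt s.1 s.2.2⟩

lemma rot_neg_mul (z : ℤ) : rot (-z) * rot z = 1 := by
  have h : ((-z : ℤ) : ℝ) = -(z : ℝ) := by push_cast; ring
  simp only [rot, h]
  ext i j
  fin_cases i <;> fin_cases j <;>
    simp [Matrix.mul_apply, Fin.sum_univ_two, mul_comm, mul_neg, neg_div] <;>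
    nlinarith [Real.sin_sq_add_cos_sq (π * z / 3)]

lemma rot_neg_mulVec (z : ℤ) (v : Fin 2 → ℝ) :
    (rot (-z)).mulVec ((rot z).mulVec v) = v := by
  rw [Matrix.mulVec_mulVec, rot_neg_mul, Matrix.one_mulVec]

/-- Time-Reversal proposition: `G(F(r,v,C)) = (r,v,C)` for every state. -/
theorem bwd_fwd_eq_id (s : FRState) : Bwd (Fwd s) = s := by
  obtain ⟨r, v, C⟩ := s
  simp only [Bwd, Fwd, flipAt, if_pos rfl]
  refine Prod.ext ?_ (Prod.ext ?_ ?_)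
  · simp only [if_true, rot_neg_mulVec, add_sub_cancel_right]
  · simp only [if_true, rot_neg_mulVec]
  · funext h'
    by_cases hh : h' = r + v <;> simp [flipAt, hh]
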